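/- For positive semidefinite ρ, σ, the equality sgn(σ^{1/2} ρ^{1/2}) = (ρ^{1/2} σ^{1/2})^{-1} ρ^{1/2} (ρ^{-1} # σ) ρ^{1/2} holds, where inverses are Moore–Penrose pseudoinverses and # is the matrix geometric mean. -/

import Mathlib

open Matrix Kronecker
open scoped ComplexOrder

noncomputable section
attribute [local instance] Classical.propDecidable

/-- Moore–Penrose pseudoinverse of a square complex matrix. -/
def pinv {n : Type*} [Fintype n] [DecidableEq n] (A : Matrix n n ℂ) : Matrix n n ℂ :=
  if h : ∃ B : Matrix n n ℂ,
      A * B * A = A ∧ B * A * B = B ∧ (A * B)ᴴ = A * B ∧ (B * A)ᴴ = B * A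
  then h.choose else 0

/-- Positive semidefinite square root (junk value `0` if the matrix is not PSD). -/
def msqrt {n : Type*} [Fintype n] [DecidableEq n] (A : Matrix n n ℂ) : Matrix n n ℂ :=
  if h : A.PosSemidef then
    h.1.eigenvectorUnitary.1 * diagonal ((↑) ∘ (√·) ∘ h.1.eigenvalues) *
      (star h.1.eigenvectorUnitary : Matrix n n ℂ)
  else 0

/-- `sgn(X) = U sgn(Σ) V*` for an SVD `X = U Σ V*`; equivalently `X (X* X)^{-1/2}`
with the Moore–Penrose pseudoinverse. -/
def msgn {n : Type*} [Fintype n] [DecidableEq n] (X : Matrix n n ℂ) : Matrix n n ℂ :=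
  X * pinv (msqrt (Xᴴ * X))

/-- Matrix geometric mean `A # B = A^{1/2} (A^{-1/2} B A^{-1/2})^{1/2} A^{1/2}`
(with Moore–Penrose pseudoinverses). -/
def geo {n : Type*} [Fintype n] [DecidableEq n] (A B : Matrix n n ℂ) : Matrix n n ℂ :=
  msqrt A * msqrt (pinv (msqrt A) * B * pinv (msqrt A)) * msqrt A

/-- The unnormalized maximally entangled state `|Ω⟩ = ∑ i, |i⟩ ⊗ |i⟩`. -/
def omegaVec (d : ℕ) : Fin d × Fin d → ℂ := fun p => if p.1 = p.2 then 1 else 0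

/-- Reduced density matrix of `|C⟩⟨C|` on the first subsystem
(partial trace over the second subsystem). -/
def reducedA {d : ℕ} (C : Fin d × Fin d → ℂ) : Matrix (Fin d) (Fin d) ℂ :=
  Matrix.of fun i j => ∑ k, C (i, k) * star (C (j, k))

/-- Partial trace over the first subsystem of the operator `|D⟩⟨C|`. -/
def trA {d : ℕ} (D C : Fin d × Fin d → ℂ) : Matrix (Fin d) (Fin d) ℂ :=
  Matrix.of fun j l => ∑ i, D (i, j) * star (C (i, l))

/-- `ℓ²→ℓ²` operator norm (largest singular value). -/
def opNorm {n : Type*} [Fintype n] [DecidableEq n] (A : Matrix n n ℂ) : ℝ :=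
  ‖(Matrix.toEuclideanCLM (𝕜 := ℂ) A : EuclideanSpace ℂ n →L[ℂ] EuclideanSpace ℂ n)‖

/-- `P` is the orthogonal projection onto the image (column space) of `A`. -/
def IsOrthProjOnto {n : Type*} [Fintype n] [DecidableEq n] (P A : Matrix n n ℂ) : Prop :=
  Pᴴ = P ∧ P * P = P ∧ LinearMap.range P.mulVecLin = LinearMap.range A.mulVecLin

/-- `η` is the smallest nonzero eigenvalue of the Hermitian matrix `M`. -/
def IsSmallestNonzeroEigenvalue {n : Type*} [Fintype n] [DecidableEq n]
    (M : Matrix n n ℂ) (η : ℝ) : Prop :=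
  ∃ hM : M.IsHermitian, η ≠ 0 ∧ (∃ i, hM.eigenvalues i = η) ∧
    ∀ i, hM.eigenvalues i ≠ 0 → η ≤ hM.eigenvalues i

section MPAux
set_option linter.unusedSectionVars false
variable {n : Type*} [Fintype n] [DecidableEq n]

def IsMP (A B : Matrix n n ℂ) : Prop :=
  A * B * A = A ∧ B * A * B = B ∧ (A * B)ᴴ = A * B ∧ (B * A)ᴴ = B * A

lemma IsMP.unique {A B C : Matrix n n ℂ} (hB : IsMP A B) (hC : IsMP A C) : B = C := by
  obtain ⟨b1, b2, b3, b4⟩ := hB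
  obtain ⟨c1, c2, c3, c4⟩ := hC
  have hAB : A * B = A * C := by
    calc A * B = (A * C * A) * B := by rw [c1]
    _ = (A * C) * (A * B) := by simp only [mul_assoc]
    _ = (A * C)ᴴ * (A * B)ᴴ := by rw [c3, b3]
    _ = Cᴴ * (A * B * A)ᴴ := by simp only [conjTranspose_mul, mul_assoc]
    _ = Cᴴ * Aᴴ := by rw [b1]
    _ = (A * C)ᴴ := by rw [conjTranspose_mul]
    _ = A * C := c3
  have hBA : B * A = C * A := by
    calc B * A = B * (A * C * A) := by rw [c1]
    _ = (B * A) * (C * A) := by simp only [mul_assoc]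
    _ = (B * A)ᴴ * (C * A)ᴴ := by rw [b4, c4]
    _ = (A * B * A)ᴴ * Cᴴ := by simp only [conjTranspose_mul, mul_assoc]
    _ = Aᴴ * Cᴴ := by rw [b1]
    _ = (C * A)ᴴ := by rw [conjTranspose_mul]
    _ = C * A := c4
  calc B = B * A * B := b2.symm
  _ = B * (A * C) := by rw [mul_assoc, hAB]
  _ = (B * A) * C := by rw [mul_assoc]
  _ = C * A * C := by rw [hBA]
  _ = C := c2

lemma pinv_eq {A B : Matrix n n ℂ} (h : IsMP A B) : pinv A = B := by
  have hex : ∃ B : Matrix n n ℂ,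
      A * B * A = A ∧ B * A * B = B ∧ (A * B)ᴴ = A * B ∧ (B * A)ᴴ = B * A := ⟨B, h⟩
  rw [pinv, dif_pos hex]
  exact IsMP.unique hex.choose_spec h

lemma IsMP.symm {A B : Matrix n n ℂ} (h : IsMP A B) : IsMP B A :=
  ⟨h.2.1, h.1, h.2.2.2, h.2.2.1⟩

lemma exists_mp_psd {A : Matrix n n ℂ} (hA : A.PosSemidef) :
    ∃ B : Matrix n n ℂ, IsMP A B ∧ B.PosSemidef := by
  have hH : A.IsHermitian := hA.1
  set U : Matrix n n ℂ := (hH.eigenvectorUnitary : Matrix n n ℂ) with hU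
  have hU2 : Uᴴ * U = 1 := by
    simpa [star_eq_conjTranspose] using (Matrix.mem_unitaryGroup_iff').mp hH.eigenvectorUnitary.2
  set d : n → ℂ := RCLike.ofReal ∘ hH.eigenvalues with hd
  set e : n → ℂ := fun i => if hH.eigenvalues i = 0 then 0 else ((hH.eigenvalues i)⁻¹ : ℝ) with he
  set B : Matrix n n ℂ := U * diagonal e * Uᴴ with hB
  have hspec : A = U * diagonal d * Uᴴ := by
    have := hH.spectral_theorem
    rw [Unitary.conjStarAlgAut_apply] at this
    exact this
  have key : ∀ (f g : n → ℂ), (U * diagonal f * Uᴴ) * (U * diagonal g * Uᴴ)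
      = U * diagonal (fun i => f i * g i) * Uᴴ := by
    intro f g
    calc (U * diagonal f * Uᴴ) * (U * diagonal g * Uᴴ)
        = U * (diagonal f * (Uᴴ * U) * diagonal g) * Uᴴ := by simp only [mul_assoc]
    _ = U * diagonal (fun i => f i * g i) * Uᴴ := by
        rw [hU2, mul_one, diagonal_mul_diagonal]
  have herm : ∀ (v : n → ℂ), (∀ i, star (v i) = v i) →
      (U * diagonal v * Uᴴ)ᴴ = U * diagonal v * Uᴴ := by
    intro v hv
    have : (diagonal v)ᴴ = diagonal v := by
      rw [diagonal_conjTranspose, show star v = v from funext hv]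
    simp only [conjTranspose_mul, conjTranspose_conjTranspose, this, mul_assoc]
  have hded : (fun i => (d i * e i) * d i) = d := by
    funext i
    by_cases h : hH.eigenvalues i = 0 <;> simp [hd, he, h]
  have hede : (fun i => (e i * d i) * e i) = e := by
    funext i
    by_cases h : hH.eigenvalues i = 0 <;> simp [hd, he, h]
  refine ⟨B, ⟨?_, ?_, ?_, ?_⟩, ?_⟩
  · rw [hspec, hB, key, key, hded]
  · rw [hspec, hB, key, key, hede]
  · rw [hspec, hB, key]
    refine herm _ fun i => ?_
    by_cases h : hH.eigenvalues i = 0 <;> simp [hd, he, h, ← Complex.ofReal_inv,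
      ← Complex.ofReal_mul, Complex.conj_ofReal]
  · rw [hspec, hB, key]
    refine herm _ fun i => ?_
    by_cases h : hH.eigenvalues i = 0 <;> simp [hd, he, h, ← Complex.ofReal_inv,
      ← Complex.ofReal_mul, Complex.conj_ofReal]
  · rw [hB]
    exact PosSemidef.mul_mul_conjTranspose_same
      (posSemidef_diagonal_iff.mpr fun i => by
        by_cases h : hH.eigenvalues i = 0
        · simp [he, h]
        · simp only [he, if_neg h]
          exact_mod_cast Complex.zero_le_real.mpr (inv_nonneg.mpr (hA.eigenvalues_nonneg i))) U

lemma isMP_pinv {A : Matrix n n ℂ} (hA : A.PosSemidef) : IsMP A (pinv A) := by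
  obtain ⟨B, hB, _⟩ := exists_mp_psd hA
  rw [pinv_eq hB]; exact hB

lemma pinv_posSemidef {A : Matrix n n ℂ} (hA : A.PosSemidef) : (pinv A).PosSemidef := by
  obtain ⟨B, hB, hBp⟩ := exists_mp_psd hA
  rw [pinv_eq hB]; exact hBp

lemma pinv_comm {A : Matrix n n ℂ} (hA : A.PosSemidef) : A * pinv A = pinv A * A := by
  obtain ⟨p1, p2, p3, p4⟩ := isMP_pinv hA
  conv_lhs => rw [← p3]
  rw [conjTranspose_mul, (pinv_posSemidef hA).1, hA.1]

lemma pinv_pinv {A : Matrix n n ℂ} (hA : A.PosSemidef) : pinv (pinv A) = A :=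
  pinv_eq (isMP_pinv hA).symm

lemma pinv_mul_pinv {A : Matrix n n ℂ} (hA : A.PosSemidef) :
    pinv (A * A) = pinv A * pinv A := by
  obtain ⟨p1, p2, p3, p4⟩ := isMP_pinv hA
  have comm : A * pinv A = pinv A * A := pinv_comm hA
  apply pinv_eq
  set K := pinv A with hK
  have h1 : A * A * (K * K) = A * K := by
    calc A * A * (K * K) = A * (A * K) * K := by simp only [mul_assoc]
    _ = A * (K * A) * K := by rw [comm]
    _ = (A * K * A) * K := by simp only [mul_assoc]
    _ = A * K := by rw [p1]
  have h2 : (K * K) * (A * A) = K * A := by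
    calc K * K * (A * A) = K * (K * A) * A := by simp only [mul_assoc]
    _ = K * (A * K) * A := by rw [comm]
    _ = (K * A * K) * A := by simp only [mul_assoc]
    _ = K * A := by rw [p2]
  refine ⟨?_, ?_, ?_, ?_⟩
  · rw [h1]
    calc A * K * (A * A) = (A * K * A) * A := by simp only [mul_assoc]
    _ = A * A := by rw [p1]
  · rw [h2]
    calc K * A * (K * K) = (K * A * K) * K := by simp only [mul_assoc]
    _ = K * K := by rw [p2]
  · rw [h1]; exact p3
  · rw [h2]; exact p4

open scoped MatrixOrder in
lemma msqrt_eq_cfcSqrt {A : Matrix n n ℂ} (hA : A.PosSemidef) : msqrt A = CFC.sqrt A := by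
  rw [CFC.sqrt_eq_cfc, cfc_nnreal_eq_real _ A, hA.1.cfc_eq, msqrt, dif_pos hA]
  have hmax := fun i => max_eq_left (hA.eigenvalues_nonneg i)
  simp [IsHermitian.cfc, Function.comp_def, hmax]

open scoped MatrixOrder in
lemma msqrt_posSemidef {A : Matrix n n ℂ} (hA : A.PosSemidef) : (msqrt A).PosSemidef := by
  rw [msqrt_eq_cfcSqrt hA]; exact (CFC.sqrt_nonneg A).posSemidef

open scoped MatrixOrder in
lemma msqrt_mul_self {A : Matrix n n ℂ} (hA : A.PosSemidef) : msqrt A * msqrt A = A := by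
  rw [msqrt_eq_cfcSqrt hA]; exact CFC.sqrt_mul_sqrt_self A hA.nonneg

open scoped MatrixOrder in
lemma msqrt_eq {A B : Matrix n n ℂ} (hA : A.PosSemidef) (hB : B.PosSemidef)
    (h : B * B = A) : msqrt A = B := by
  rw [msqrt_eq_cfcSqrt hA]
  exact (CFC.sqrt_eq_iff A B hA.nonneg hB.nonneg).mpr h

lemma msqrt_pinv {ρ : Matrix n n ℂ} (hρ : ρ.PosSemidef) :
    msqrt (pinv ρ) = pinv (msqrt ρ) := by
  have hApsd := msqrt_posSemidef hρ
  refine msqrt_eq (pinv_posSemidef hρ) (pinv_posSemidef hApsd) ?_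
  rw [← pinv_mul_pinv hApsd, msqrt_mul_self hρ]

lemma isMP_conjTranspose_general (X : Matrix n n ℂ) :
    IsMP Xᴴ (X * pinv (Xᴴ * X)) := by
  have hGpsd : (Xᴴ * X).PosSemidef := posSemidef_conjTranspose_mul_self X
  obtain ⟨p1, p2, p3, p4⟩ := isMP_pinv hGpsd
  have hKH : (pinv (Xᴴ * X))ᴴ = pinv (Xᴴ * X) := (pinv_posSemidef hGpsd).1
  set G := Xᴴ * X with hGdef
  set K := pinv G with hKdef
  have hGH : Gᴴ = G := hGpsd.1
  have key : G * K * Xᴴ = Xᴴ := by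
    have hNH : (G * K * Xᴴ - Xᴴ)ᴴ = X * K * G - X := by
      simp only [conjTranspose_sub, conjTranspose_mul, conjTranspose_conjTranspose,
        hKH, hGH, mul_assoc]
    have hN' : (G * K * Xᴴ - Xᴴ) * (X * K * G - X) = 0 := by
      have expand : (G * K * Xᴴ - Xᴴ) * (X * K * G - X)
          = G * K * (Xᴴ * X) * K * G - G * K * (Xᴴ * X) - Xᴴ * X * K * G + Xᴴ * X := by
        noncomm_ring
      rw [expand, ← hGdef, p1, p1]
      abel
    have hzero : G * K * Xᴴ - Xᴴ = 0 :=
      self_mul_conjTranspose_eq_zero.mp (by rw [hNH]; exact hN')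
    have := sub_eq_zero.mp hzero
    exact this
  refine ⟨?_, ?_, ?_, ?_⟩
  · calc Xᴴ * (X * K) * Xᴴ = (Xᴴ * X) * K * Xᴴ := by simp only [mul_assoc]
    _ = Xᴴ := by rw [← hGdef, key]
  · calc (X * K) * Xᴴ * (X * K) = X * (K * G * K) := by simp only [hGdef, mul_assoc]
    _ = X * K := by rw [p2]
  · have h : Xᴴ * (X * K) = G * K := by simp only [hGdef, mul_assoc]
    rw [h]; exact p3
  · simp only [conjTranspose_mul, conjTranspose_conjTranspose, hKH, mul_assoc]

lemma proj_absorb {A T : Matrix n n ℂ} (hA : A.PosSemidef) (hT : T.PosSemidef)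
    (C : Matrix n n ℂ) (h : T * T = A * C * Aᴴ) :
    A * pinv A * T = T := by
  obtain ⟨p1, p2, p3, p4⟩ := isMP_pinv hA
  set P := A * pinv A with hP
  have h1 : (1 - P) * A = 0 := by
    rw [sub_mul, one_mul, hP, mul_assoc, ← mul_assoc, p1, sub_self]
  have hPH : Pᴴ = P := p3
  have hN : ((1 - P) * T) * ((1 - P) * T)ᴴ = 0 := by
    have hadj : ((1 - P) * T)ᴴ = T * (1 - P) := by
      rw [conjTranspose_mul, hT.1, conjTranspose_sub, conjTranspose_one, hPH]
    rw [hadj]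
    calc (1 - P) * T * (T * (1 - P)) = (1 - P) * (T * T) * (1 - P) := by
          simp only [mul_assoc]
    _ = (1 - P) * (A * C * Aᴴ) * (1 - P) := by rw [h]
    _ = ((1 - P) * A) * (C * (Aᴴ * (1 - P))) := by simp only [mul_assoc]
    _ = 0 := by rw [h1, zero_mul]
  have hzero : (1 - P) * T = 0 := self_mul_conjTranspose_eq_zero.mp hN
  rw [sub_mul, one_mul] at hzero
  exact (sub_eq_zero.mp hzero).symm

lemma proj_absorb' {A T : Matrix n n ℂ} (hA : A.PosSemidef) (hT : T.PosSemidef)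
    (C : Matrix n n ℂ) (h : T * T = A * C * Aᴴ) :
    T * (pinv A * A) = T := by
  have hl := proj_absorb hA hT C h
  have := congrArg conjTranspose hl
  rw [conjTranspose_mul, conjTranspose_mul, hT.1, (pinv_posSemidef hA).1, hA.1] at this
  exact this

end MPAux

theorem sgn_eq_geo_mean_formula {n : Type*} [Fintype n] [DecidableEq n]
    (ρ σ : Matrix n n ℂ) (hρ : ρ.PosSemidef) (hσ : σ.PosSemidef) :
    msgn (msqrt σ * msqrt ρ)
      = pinv (msqrt ρ * msqrt σ) * msqrt ρ * geo (pinv ρ) σ * msqrt ρ := by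
  set A := msqrt ρ with hAdef
  set B := msqrt σ with hBdef
  have hApsd : A.PosSemidef := msqrt_posSemidef hρ
  have hBpsd : B.PosSemidef := msqrt_posSemidef hσ
  have hAH : Aᴴ = A := hApsd.1
  have hBH : Bᴴ = B := hBpsd.1
  have hBB : B * B = σ := msqrt_mul_self hσ
  have hXH : (B * A)ᴴ = A * B := by rw [conjTranspose_mul, hAH, hBH]
  have hG : (A * B) * (B * A) = A * σ * A := by rw [← hBB]; simp only [mul_assoc]
  have hGpsd : (A * σ * A).PosSemidef := by
    rw [← hG, ← hXH]; exact posSemidef_conjTranspose_mul_self _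
  set S := msqrt (A * σ * A) with hSdef
  have hSpsd : S.PosSemidef := msqrt_posSemidef hGpsd
  have hSS : S * S = A * σ * A := msqrt_mul_self hGpsd
  have habsorb : A * pinv A * S = S :=
    proj_absorb hApsd hSpsd σ (by rw [hAH]; exact hSS)
  have habsorb2 : A * (pinv A * S) = S := by rw [← mul_assoc]; exact habsorb
  have habsorb' : S * (pinv A * A) = S :=
    proj_absorb' hApsd hSpsd σ (by rw [hAH]; exact hSS)
  have hpAB : pinv (A * B) = B * A * (pinv S * pinv S) := by
    have h1 := pinv_eq (isMP_conjTranspose_general (B * A))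
    rw [hXH, hG, ← hSS, pinv_mul_pinv hSpsd] at h1
    exact h1
  have hfin : pinv S * (pinv S * S) = pinv S := by
    obtain ⟨s1, s2, s3, s4⟩ := isMP_pinv hSpsd
    calc pinv S * (pinv S * S) = pinv S * (S * pinv S) := by rw [← pinv_comm hSpsd]
    _ = pinv S * S * pinv S := by rw [mul_assoc]
    _ = pinv S := s2
  have key : B * A * (pinv S * pinv S) * A * (pinv A * S * pinv A) * A
      = B * A * pinv S := by
    calc B * A * (pinv S * pinv S) * A * (pinv A * S * pinv A) * A
        = B * A * (pinv S * (pinv S * (A * (pinv A * (S * (pinv A * A)))))) := by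
          simp only [mul_assoc]
    _ = B * A * (pinv S * (pinv S * (A * (pinv A * S)))) := by rw [habsorb']
    _ = B * A * (pinv S * (pinv S * S)) := by rw [habsorb2]
    _ = B * A * pinv S := by rw [hfin]
  simp only [msgn, geo]
  rw [msqrt_pinv hρ, pinv_pinv hApsd, hXH, hG, ← hSdef, hpAB, key]
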